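/- Let q be an odd prime power and d_1,...,d_n positive integers each dividing q-1, with a_1,...,a_n ∈ F_q^*. For each j let w_j = gcd(d_j, lcm(d_1,...,d_{j-1},d_{j+1},...,d_n)). Then the number of solutions in F_q^n to a_1 x_1^{d_1} + ... + a_n x_n^{d_n} = 0 equals the number of solutions to a_1 x_1^{w_1} + ... + a_n x_n^{w_n} = 0. -/

import Mathlib

open Finset

namespace Stmt19Aux

variable {F : Type*} [Field F] [Fintype F] [DecidableEq F]

noncomputable instance : Fintype (MulChar F ℂ) := Fintype.ofFinite _

open scoped Classical in
/-- The finset of multiplicative characters `χ` with `χ ^ m = 1`. -/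
noncomputable def H (F : Type*) [Field F] [Fintype F] (m : ℕ) : Finset (MulChar F ℂ) :=
  univ.filter fun χ => χ ^ m = 1

lemma mem_H {m : ℕ} {χ : MulChar F ℂ} : χ ∈ H F m ↔ χ ^ m = 1 := by
  classical
  simp [H]

/-- The finset of "augmented characters": `none` stands for the delta function at `0`. -/
noncomputable def K (F : Type*) [Field F] [Fintype F] (m : ℕ) :
    Finset (Option (MulChar F ℂ)) :=
  insert none ((H F m).map Function.Embedding.some)

/-- Value of an augmented character. -/
noncomputable def val (ψ : Option (MulChar F ℂ)) (s : F) : ℂ :=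
  Option.elim ψ (if s = 0 then 1 else 0) (fun χ => χ s)

/-- The character part of an augmented character. -/
noncomputable def mchar (ψ : Option (MulChar F ℂ)) : MulChar F ℂ :=
  Option.elim ψ 1 id

lemma val_mul (ψ : Option (MulChar F ℂ)) {c : F} (hc : c ≠ 0) (s : F) :
    val ψ (c * s) = mchar ψ c * val ψ s := by
  cases ψ with
  | none =>
      simp only [val, mchar, Option.elim, mul_eq_zero, hc, false_or]
      rw [MulChar.one_apply (isUnit_iff_ne_zero.mpr hc)]
      ring
  | some χ => simp [val, mchar, map_mul]

lemma mchar_pow_eq_one {m : ℕ} {ψ : Option (MulChar F ℂ)} (hψ : ψ ∈ K F m) :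
    (mchar ψ) ^ m = 1 := by
  cases ψ with
  | none => simp [mchar]
  | some χ =>
      simp only [K, mem_insert, reduceCtorEq, mem_map, Function.Embedding.some_apply,
        Option.some.injEq, false_or] at hψ
      obtain ⟨χ', hχ', rfl⟩ := hψ
      exact mem_H.mp hχ'

lemma some_mem_K {m : ℕ} {χ : MulChar F ℂ} (h : χ ^ m = 1) : some χ ∈ K F m := by
  simp only [K, mem_insert, reduceCtorEq, mem_map, Function.Embedding.some_apply,
    Option.some.injEq, false_or]
  exact ⟨χ, mem_H.mpr h, rfl⟩

lemma K_mono {m m' : ℕ} (h : m ∣ m') : K F m ⊆ K F m' := by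
  intro ψ hψ
  cases ψ with
  | none => simp [K]
  | some χ =>
      simp only [K, mem_insert, reduceCtorEq, mem_map, Function.Embedding.some_apply,
        Option.some.injEq, false_or] at hψ ⊢
      obtain ⟨χ', hχ', rfl⟩ := hψ
      refine ⟨χ', mem_H.mpr ?_, rfl⟩
      have h1 := mem_H.mp hχ'
      have : orderOf χ' ∣ m' := dvd_trans (orderOf_dvd_of_pow_eq_one h1) h
      exact orderOf_dvd_iff_pow_eq_one.mp this

lemma card_H {m : ℕ} (hm : 0 < m) :
    (H F m).card = (univ.filter fun y : F => y ^ m = 1).card := by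
  classical
  haveI : Finite F := Finite.of_fintype F
  obtain ⟨e⟩ := MulChar.mulEquiv_units F ℂ
  have h1 : (H F m).card = (univ.filter fun u : Fˣ => u ^ m = 1).card := by
    refine Finset.card_nbij' (fun χ => e χ) (fun u => e.symm u) ?_ ?_ ?_ ?_
    · intro χ hχ
      simp only [mem_coe, mem_filter, mem_univ, true_and]
      rw [← map_pow, mem_H.mp hχ, map_one]
    · intro u hu
      simp only [mem_coe, mem_filter, mem_univ, true_and] at hu ⊢
      rw [mem_H]
      apply e.injective
      rw [map_pow, map_one, e.apply_symm_apply, hu]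
    · intro χ _; exact e.symm_apply_apply χ
    · intro u _; exact e.apply_symm_apply u
  have h2 : (univ.filter fun u : Fˣ => u ^ m = 1).card
      = (univ.filter fun y : F => y ^ m = 1).card := by
    refine Finset.card_nbij' (fun u => (u : F))
      (fun y => if hy : y = 0 then 1 else Units.mk0 y hy) ?_ ?_ ?_ ?_
    · intro u hu
      simp only [mem_coe, mem_filter, mem_univ, true_and] at hu ⊢
      rw [← Units.val_pow_eq_pow_val, hu, Units.val_one]
    · intro y hy
      simp only [mem_coe, mem_filter, mem_univ, true_and] at hy
      have hy0 : y ≠ 0 := by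
        rintro rfl
        rw [zero_pow hm.ne'] at hy
        exact one_ne_zero hy.symm
      simp only [mem_coe, mem_filter, mem_univ, true_and, dif_neg hy0]
      ext
      rw [Units.val_pow_eq_pow_val, Units.val_mk0, hy, Units.val_one]
    · intro u hu
      simp only [mem_coe, mem_filter, mem_univ, true_and] at hu
      have : (u : F) ≠ 0 := Units.ne_zero u
      simp only [dif_neg this]
      ext; simp
    · intro y hy
      simp only [mem_coe, mem_filter, mem_univ, true_and] at hy
      have hy0 : y ≠ 0 := by
        rintro rfl
        rw [zero_pow hm.ne'] at hy
        exact one_ne_zero hy.symm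
      simp [dif_neg hy0]
  rw [h1, h2]

/-- The key counting formula: number of `m`-th roots of `t` as a character sum. -/
lemma count_pow {m : ℕ} (hm : 0 < m) (t : F) :
    ((univ.filter fun y : F => y ^ m = t).card : ℂ) = ∑ ψ ∈ K F m, val ψ t := by
  classical
  have hKsum : ∑ ψ ∈ K F m, val ψ t
      = (if t = 0 then (1 : ℂ) else 0) + ∑ χ ∈ H F m, χ t := by
    rw [K, Finset.sum_insert (by simp), Finset.sum_map]
    simp [val]
  rw [hKsum]
  by_cases ht : t = 0
  · subst ht
    have hfil : (univ.filter fun y : F => y ^ m = 0) = {0} := by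
      ext y
      simp [pow_eq_zero_iff hm.ne']
    rw [hfil]
    have hz : ∀ χ ∈ H F m, (χ : MulChar F ℂ) (0 : F) = 0 := fun χ _ =>
      MulChar.map_nonunit χ (by simp)
    rw [Finset.sum_congr rfl hz]
    simp
  · rw [if_neg ht, zero_add]
    by_cases hA : ∃ v : F, v ^ m = t
    · obtain ⟨v, hv⟩ := hA
      have hv0 : v ≠ 0 := by
        rintro rfl
        rw [zero_pow hm.ne'] at hv
        exact ht hv.symm
      -- every χ in H takes value 1 at t
      have hχt : ∀ χ ∈ H F m, (χ : MulChar F ℂ) t = 1 := by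
        intro χ hχ
        rw [← hv, map_pow, ← MulChar.pow_apply' χ hm.ne', mem_H.mp hχ,
          MulChar.one_apply (isUnit_iff_ne_zero.mpr hv0)]
      rw [Finset.sum_congr rfl hχt, Finset.sum_const, nsmul_eq_mul, mul_one]
      -- card of fiber equals card of m-th roots of unity
      have hcard : (univ.filter fun y : F => y ^ m = t).card
          = (univ.filter fun y : F => y ^ m = 1).card := by
        refine (Finset.card_nbij' (fun y => y * v⁻¹) (fun y => y * v) ?_ ?_ ?_ ?_)
        · intro y hy
          simp only [mem_coe, mem_filter, mem_univ, true_and] at hy ⊢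
          rw [mul_pow, hy, inv_pow, hv, mul_inv_cancel₀ ht]
        · intro y hy
          simp only [mem_coe, mem_filter, mem_univ, true_and] at hy ⊢
          rw [mul_pow, hy, one_mul, hv]
        · intro y _
          field_simp
        · intro y _
          field_simp
      rw [hcard, ← card_H hm]
    · push_neg at hA
      -- t is not an m-th power; find a character in H with χ t ≠ 1
      have hfil : (univ.filter fun y : F => y ^ m = t) = ∅ := by
        ext y; simp only [mem_filter, mem_univ, true_and, notMem_empty, iff_false]
        exact hA y
      rw [hfil]
      have hu : IsUnit t := isUnit_iff_ne_zero.mpr ht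
      set u : Fˣ := hu.unit with hu_def
      set Hsub : Subgroup Fˣ := (powMonoidHom m : Fˣ →* Fˣ).range with hHsub
      haveI : Finite F := Finite.of_fintype F
      have hne : (QuotientGroup.mk' Hsub) u ≠ 1 := by
        rw [Ne, QuotientGroup.mk'_apply, QuotientGroup.eq_one_iff]
        rintro ⟨v, hv⟩
        apply hA (v : F)
        have : ((v ^ m : Fˣ) : F) = t := by
          rw [show (v ^ m : Fˣ) = u from hv, hu_def, IsUnit.unit_spec]
        simpa [Units.val_pow_eq_pow_val] using this
      haveI : Finite (Fˣ ⧸ Hsub) := Quotient.finite _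
      haveI : NeZero (Monoid.exponent (Fˣ ⧸ Hsub)) := ⟨by exact (Monoid.ExponentExists.of_finite (G := Fˣ ⧸ Hsub)).exponent_ne_zero⟩
      obtain ⟨φ, hφ⟩ :=
        CommGroup.exists_apply_ne_one_of_hasEnoughRootsOfUnity (Fˣ ⧸ Hsub) ℂ hne
      set ρ : Fˣ →* ℂˣ := φ.comp (QuotientGroup.mk' Hsub) with hρ
      set χ0 : MulChar F ℂ := MulChar.ofUnitHom ρ with hχ0
      have hχ0H : χ0 ∈ H F m := by
        rw [mem_H]
        ext x
        rw [MulChar.pow_apply_coe, MulChar.one_apply_coe, hχ0, MulChar.ofUnitHom_coe]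
        have : (ρ x) ^ m = 1 := by
          have hmem : x ^ m ∈ Hsub := ⟨x, rfl⟩
          have h4 : (QuotientGroup.mk' Hsub) (x ^ m) = 1 := by
            rw [QuotientGroup.mk'_apply]
            exact (QuotientGroup.eq_one_iff _).mpr hmem
          calc (ρ x) ^ m = ρ (x ^ m) := (map_pow ρ x m).symm
            _ = φ ((QuotientGroup.mk' Hsub) (x ^ m)) := rfl
            _ = 1 := by rw [h4, map_one]
        calc ((ρ x : ℂˣ) : ℂ) ^ m = (((ρ x) ^ m : ℂˣ) : ℂ) := by
              rw [Units.val_pow_eq_pow_val]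
          _ = 1 := by rw [this, Units.val_one]
      have hχ0t : χ0 t ≠ 1 := by
        have : χ0 t = ((ρ u : ℂˣ) : ℂ) := by
          rw [hχ0, show t = ((u : Fˣ) : F) from (IsUnit.unit_spec hu).symm,
            MulChar.ofUnitHom_coe]
        rw [this]
        intro hcontra
        apply hφ
        ext
        rw [hρ, MonoidHom.comp_apply] at hcontra
        simpa using hcontra
      -- standard orthogonality trick
      have key : χ0 t * ∑ χ ∈ H F m, χ t = ∑ χ ∈ H F m, χ t := by
        rw [Finset.mul_sum]
        have : ∀ χ ∈ H F m, χ0 t * χ t = (χ0 * χ) t := fun χ _ => rfl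
        rw [Finset.sum_congr rfl this]
        refine Finset.sum_nbij' (fun χ => χ0 * χ) (fun χ => χ0⁻¹ * χ) ?_ ?_ ?_ ?_ ?_
        · intro χ hχ
          rw [mem_H, mul_pow, mem_H.mp hχ0H, mem_H.mp hχ, mul_one]
        · intro χ hχ
          rw [mem_H, mul_pow, inv_pow, mem_H.mp hχ0H, mem_H.mp hχ, inv_one, mul_one]
        · intro χ _
          show χ0⁻¹ * (χ0 * χ) = χ
          rw [← mul_assoc, inv_mul_cancel, one_mul]
        · intro χ _
          show χ0 * (χ0⁻¹ * χ) = χ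
          rw [← mul_assoc, mul_inv_cancel, one_mul]
        · intro χ _; rfl
      have : (χ0 t - 1) * ∑ χ ∈ H F m, χ t = 0 := by
        rw [sub_mul, one_mul, key, sub_self]
      rcases mul_eq_zero.mp this with h | h
      · exact absurd (by linear_combination h) hχ0t
      · rw [h]; simp

end Stmt19Aux

open Stmt19Aux in
theorem stmt19 (n : ℕ)
    (F : Type*) [Field F] [Fintype F] [DecidableEq F] (hodd : Odd (Fintype.card F))
    (d : Fin n → ℕ) (hdpos : ∀ j, 0 < d j) (hdvd : ∀ j, d j ∣ Fintype.card F - 1)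
    (a : Fin n → F) (ha : ∀ j, a j ≠ 0)
    (w : Fin n → ℕ) (hw : ∀ j, w j = Nat.gcd (d j) (Finset.lcm (Finset.univ.erase j) d)) :
    Fintype.card {x : Fin n → F // ∑ i, a i * x i ^ d i = 0} =
      Fintype.card {x : Fin n → F // ∑ i, a i * x i ^ w i = 0} := by
  classical
  haveI : Finite F := Finite.of_fintype F
  set V : Finset (Fin n → F) := univ.filter (fun t : Fin n → F => ∑ i, a i * t i = 0) with hV
  -- the inner sum, independent of the exponents
  set T : (Fin n → Option (MulChar F ℂ)) → ℂ :=
    fun g => ∑ t ∈ V, ∏ i, val (g i) (t i) with hT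
  -- general counting formula
  have count_eq : ∀ e : Fin n → ℕ, (∀ i, 0 < e i) →
      (Fintype.card {x : Fin n → F // ∑ i, a i * x i ^ e i = 0} : ℂ)
        = ∑ g ∈ Fintype.piFinset (fun i => K F (e i)), T g := by
    intro e he
    rw [Fintype.card_subtype]
    have hfib : (univ.filter fun x : Fin n → F => ∑ i, a i * x i ^ e i = 0).card
        = ∑ t ∈ V, (univ.filter fun x : Fin n → F => (fun i => x i ^ e i) = t).card := by
      have H1 : ∀ x ∈ (univ.filter fun x : Fin n → F => ∑ i, a i * x i ^ e i = 0),
          (fun i => x i ^ e i) ∈ V := by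
        intro x hx
        simp only [hV, mem_filter, mem_univ, true_and] at hx ⊢
        exact hx
      rw [Finset.card_eq_sum_card_fiberwise H1]
      refine Finset.sum_congr rfl fun t ht => ?_
      congr 1
      ext x
      simp only [mem_filter, mem_univ, true_and, and_iff_right_iff_imp]
      intro hx
      simp only [hV, mem_filter, mem_univ, true_and] at ht
      rw [← ht]
      rw [funext_iff] at hx
      exact Finset.sum_congr rfl fun i _ => by rw [hx i]
    rw [hfib]
    push_cast
    have hfibcard : ∀ t : Fin n → F,
        ((univ.filter fun x : Fin n → F => (fun i => x i ^ e i) = t).card : ℂ)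
          = ∏ i, ((univ.filter fun y : F => y ^ e i = t i).card : ℂ) := by
      intro t
      have : (univ.filter fun x : Fin n → F => (fun i => x i ^ e i) = t).card
          = ∏ i, (univ.filter fun y : F => y ^ e i = t i).card := by
        rw [← Fintype.card_subtype]
        have e1 : {x : Fin n → F // (fun i => x i ^ e i) = t}
            ≃ ∀ i, {y : F // y ^ e i = t i} :=
          (Equiv.subtypeEquivRight (fun x => by simp [funext_iff])).trans
            (Equiv.subtypePiEquivPi)
        rw [Fintype.card_congr e1, Fintype.card_pi]
        exact Finset.prod_congr rfl fun i _ => (Fintype.card_subtype _)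
      rw [this]; push_cast; rfl
    calc ∑ t ∈ V, ((univ.filter fun x : Fin n → F => (fun i => x i ^ e i) = t).card : ℂ)
        = ∑ t ∈ V, ∏ i, ∑ ψ ∈ K F (e i), val ψ (t i) := by
          refine Finset.sum_congr rfl fun t _ => ?_
          rw [hfibcard t]
          exact Finset.prod_congr rfl fun i _ => count_pow (he i) (t i)
      _ = ∑ t ∈ V, ∑ g ∈ Fintype.piFinset (fun i => K F (e i)), ∏ i, val (g i) (t i) := by
          refine Finset.sum_congr rfl fun t _ => ?_
          rw [Finset.prod_univ_sum]
      _ = ∑ g ∈ Fintype.piFinset (fun i => K F (e i)), T g := Finset.sum_comm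
  -- vanishing lemma
  have vanish : ∀ g : Fin n → Option (MulChar F ℂ),
      (∀ j, g j ∈ K F (d j)) → ∀ i : Fin n, g i ∉ K F (w i) → T g = 0 := by
    intro g hg i hgi
    by_contra hTne
    -- scaling invariance
    have hscale : ∀ c : F, c ≠ 0 → (∏ j, mchar (g j) c) * T g = T g := by
      intro c hc
      rw [hT]
      calc (∏ j, mchar (g j) c) * ∑ t ∈ V, ∏ j, val (g j) (t j)
          = ∑ t ∈ V, ∏ j, val (g j) (c * t j) := by
            rw [Finset.mul_sum]
            refine Finset.sum_congr rfl fun t _ => ?_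
            rw [← Finset.prod_mul_distrib]
            exact Finset.prod_congr rfl fun j _ => (val_mul (g j) hc (t j)).symm
        _ = ∑ t ∈ V, ∏ j, val (g j) (t j) := by
            refine Finset.sum_nbij' (fun t => fun j => c * t j)
              (fun t => fun j => c⁻¹ * t j) ?_ ?_ ?_ ?_ ?_
            · intro t ht
              simp only [hV, mem_filter, mem_univ, true_and] at ht ⊢
              have : ∑ x, a x * (c * t x) = c * ∑ x, a x * t x := by
                rw [Finset.mul_sum]; exact Finset.sum_congr rfl fun x _ => by ring
              rw [this, ht, mul_zero]
            · intro t ht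
              simp only [hV, mem_filter, mem_univ, true_and] at ht ⊢
              have : ∑ x, a x * (c⁻¹ * t x) = c⁻¹ * ∑ x, a x * t x := by
                rw [Finset.mul_sum]; exact Finset.sum_congr rfl fun x _ => by ring
              rw [this, ht, mul_zero]
            · intro t _; funext j
              show c⁻¹ * (c * t j) = t j
              rw [inv_mul_cancel_left₀ hc]
            · intro t _; funext j
              show c * (c⁻¹ * t j) = t j
              rw [mul_inv_cancel_left₀ hc]
            · intro t _
              exact Finset.prod_congr rfl fun j _ => rfl
    -- hence the product character is trivial
    set X : MulChar F ℂ := ∏ j, mchar (g j) with hX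
    have hXapp : ∀ c : F, c ≠ 0 → X c = 1 := by
      intro c hc
      have h1 : X c = ∏ j, mchar (g j) c := by
        rw [hX]
        induction (univ : Finset (Fin n)) using Finset.induction with
        | empty => simp [MulChar.one_apply (isUnit_iff_ne_zero.mpr hc)]
        | insert _ _ hj ih =>
            rw [Finset.prod_insert hj, Finset.prod_insert hj, ← ih]
            rfl
      have h2 := hscale c hc
      have h3 : (∏ j, mchar (g j) c - 1) * T g = 0 := by
        rw [sub_mul, one_mul, h2, sub_self]
      rcases mul_eq_zero.mp h3 with h | h
      · rw [h1]; linear_combination h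
      · exact absurd h hTne
    have hX1 : X = 1 := by
      ext x
      rw [MulChar.one_apply_coe]
      exact hXapp x (Units.ne_zero x)
    -- now derive a contradiction
    have hgi_ne : g i ≠ none := fun h => hgi (by rw [h]; simp [K])
    obtain ⟨χi, hχi⟩ : ∃ χi, g i = some χi := Option.ne_none_iff_exists'.mp hgi_ne
    have hχid : χi ^ d i = 1 := by
      have := mchar_pow_eq_one (hg i)
      rwa [hχi] at this
    set L : ℕ := Finset.lcm (Finset.univ.erase i) d with hL
    have hPL : (∏ j ∈ univ.erase i, mchar (g j)) ^ L = 1 := by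
      rw [← Finset.prod_pow]
      refine Finset.prod_eq_one fun j hj => ?_
      have hdj : d j ∣ L := Finset.dvd_lcm hj
      have h1 : mchar (g j) ^ d j = 1 := mchar_pow_eq_one (hg j)
      exact orderOf_dvd_iff_pow_eq_one.mp
        (dvd_trans (orderOf_dvd_of_pow_eq_one h1) hdj)
    have hXL : χi ^ L * (∏ j ∈ univ.erase i, mchar (g j)) ^ L = 1 := by
      rw [← mul_pow]
      have : χi * ∏ j ∈ univ.erase i, mchar (g j) = X := by
        rw [hX, ← Finset.mul_prod_erase univ _ (Finset.mem_univ i), hχi]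
        rfl
      rw [this, hX1, one_pow]
    have hχiL : χi ^ L = 1 := by
      rw [hPL, mul_one] at hXL
      exact hXL
    have hχiw : χi ^ w i = 1 := by
      rw [hw i]
      exact orderOf_dvd_iff_pow_eq_one.mp
        (Nat.dvd_gcd (orderOf_dvd_of_pow_eq_one hχid) (orderOf_dvd_of_pow_eq_one hχiL))
    exact hgi (hχi ▸ some_mem_K hχiw)
  -- assemble
  have hwpos : ∀ i, 0 < w i := by
    intro i
    rw [hw i]
    exact Nat.gcd_pos_of_pos_left _ (hdpos i)
  have hwd : ∀ i, w i ∣ d i := fun i => (hw i) ▸ Nat.gcd_dvd_left _ _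
  have hsub : Fintype.piFinset (fun i => K F (w i)) ⊆ Fintype.piFinset (fun i => K F (d i)) :=
    Fintype.piFinset_subset _ _ fun i => K_mono (hwd i)
  have hmain : ∑ g ∈ Fintype.piFinset (fun i => K F (w i)), T g
      = ∑ g ∈ Fintype.piFinset (fun i => K F (d i)), T g := by
    refine Finset.sum_subset hsub fun g hgd hgw => ?_
    rw [Fintype.mem_piFinset] at hgd
    obtain ⟨i, hi⟩ : ∃ i, g i ∉ K F (w i) := by
      by_contra hc
      push_neg at hc
      exact hgw (Fintype.mem_piFinset.mpr hc)
    exact vanish g hgd i hi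
  have := (count_eq d hdpos).trans (hmain ▸ (count_eq w hwpos).symm)
  exact_mod_cast this
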